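/- Let s > 0, let α ≥ 2 be an even natural number, let g(y) = y / (1 + (y/s)^α) be the Rapp function, let d ≥ 1, and let x⁽¹⁾, …, x⁽ᴰ⁾ ∈ ℝ^d be D pairwise distinct observation vectors with augmented vectors x̃⁽ⁱ⁾ = (x⁽ⁱ⁾₁, …, x⁽ⁱ⁾_d, 1) ∈ ℝ^{d+1}. Let the random matrix H ∈ ℝ^{D × (d+1)} have independent standard Gaussian entries (i.e., H is distributed according to the product of D·(d+1) copies of the standard Gaussian measure on ℝ). Then for almost every realization of H, the D × D hidden-layer output matrix G with entries G_{i,j} = g(⟨H_{j,·}, x̃⁽ⁱ⁾⟩) (where H_{j,·} denotes the j-th row of H and ⟨·,·⟩ the Euclidean inner product on ℝ^{d+1}) is invertible; consequently, for almost every H, for every target vector t ∈ ℝ^D there exists a weight vector w ∈ ℝ^D with G·w = t. -/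

import Mathlib

open MeasureTheory ProbabilityTheory Set

section ELMAux

lemma gaussian_ae_ne_zero_of_analytic (f : ℝ → ℝ) (hf : AnalyticOnNhd ℝ f Set.univ)
    (hne : ∃ z, f z ≠ 0) : ∀ᵐ x ∂(gaussianReal 0 1), f x ≠ 0 := by
  obtain ⟨z₀, hz₀⟩ := hne
  set Z : Set ℝ := {x | f x = 0} with hZ
  have hiso : ∀ z ∈ Z, ∀ᶠ x in nhdsWithin z {z}ᶜ, f x ≠ 0 := by
    intro z hz
    rcases (hf z (mem_univ z)).eventually_eq_zero_or_eventually_ne_zero with h | h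
    · exact absurd (hf.eqOn_zero_of_preconnected_of_eventuallyEq_zero isPreconnected_univ
        (mem_univ z) h (mem_univ z₀)) hz₀
    · exact h
  have hdisc : DiscreteTopology Z := by
    rw [discreteTopology_subtype_iff]
    intro x hx
    rw [← Filter.empty_mem_iff_bot]
    have : {y | f y ≠ 0} ∩ Z ∈ nhdsWithin x {x}ᶜ ⊓ Filter.principal Z :=
      Filter.inter_mem_inf (hiso x hx) (Filter.mem_principal_self Z)
    convert this using 1
    ext y; simp only [Set.mem_empty_iff_false, Set.mem_inter_iff, false_iff]
    rintro ⟨h1, h2⟩; exact h1 h2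
  have hcount : Z.Countable := by
    have : Countable Z := TopologicalSpace.separableSpace_iff_countable.mp inferInstance
    exact Set.countable_coe_iff.mp this
  have hnull : gaussianReal 0 1 Z = 0 :=
    (gaussianReal_absolutelyContinuous 0 one_ne_zero) (hcount.measure_zero _)
  rw [ae_iff]
  simpa using hnull

lemma step_ae {β γ : Type*} [TopologicalSpace β] [MeasurableSpace β] [OpensMeasurableSpace β]
    [SecondCountableTopology β]
    [TopologicalSpace γ] [MeasurableSpace γ] [OpensMeasurableSpace γ]
    [SecondCountableTopology γ]
    (μ : Measure β) (ν : Measure γ) [SFinite μ] [SFinite ν]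
    {F : β × γ → ℝ} (hF : Continuous F)
    (h1 : ∀ᵐ a ∂μ, ∃ y, F (a, y) ≠ 0)
    (h2 : ∀ a, (∃ y, F (a, y) ≠ 0) → ∀ᵐ y ∂ν, F (a, y) ≠ 0) :
    ∀ᵐ z ∂(μ.prod ν), F z ≠ 0 := by
  have hm : MeasurableSet {z : β × γ | F z ≠ 0} := by
    have : {z : β × γ | F z ≠ 0} = (F ⁻¹' {0})ᶜ := by ext z; simp
    rw [this]
    exact (isClosed_singleton.preimage hF).measurableSet.compl
  rw [Measure.ae_prod_iff_ae_ae hm]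
  filter_upwards [h1] with a ha using h2 a ha

/-- the `Fin.cons` continuous linear map -/
noncomputable def consCLM (β : Type*) [NormedAddCommGroup β] [NormedSpace ℝ β] (n : ℕ) :
    (β × (Fin n → β)) →L[ℝ] (Fin (n + 1) → β) :=
  ContinuousLinearMap.pi (fun j => Fin.cases (ContinuousLinearMap.fst ℝ β (Fin n → β))
    (fun k => (ContinuousLinearMap.proj k).comp (ContinuousLinearMap.snd ℝ β (Fin n → β))) j)

lemma consCLM_apply {β : Type*} [NormedAddCommGroup β] [NormedSpace ℝ β] {n : ℕ}
    (z : β × (Fin n → β)) : consCLM β n z = Fin.cons z.1 z.2 := by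
  funext j
  induction j using Fin.cases with
  | zero => rfl
  | succ k => rfl

lemma aux_pi {β : Type*} [NormedAddCommGroup β] [NormedSpace ℝ β] [MeasurableSpace β]
    [OpensMeasurableSpace β] [SecondCountableTopology β]
    (μ : Measure β) [IsProbabilityMeasure μ]
    (hbase : ∀ f : β → ℝ, AnalyticOnNhd ℝ f Set.univ → (∃ z, f z ≠ 0) → ∀ᵐ x ∂μ, f x ≠ 0) :
    ∀ (n : ℕ) (f : (Fin n → β) → ℝ), AnalyticOnNhd ℝ f Set.univ → (∃ z, f z ≠ 0) →
      ∀ᵐ x ∂(Measure.pi fun _ : Fin n => μ), f x ≠ 0 := by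
  intro n
  induction n with
  | zero =>
    intro f _ ⟨z, hz⟩
    exact Filter.Eventually.of_forall fun x => (Subsingleton.elim z x) ▸ hz
  | succ n ih =>
    intro f hf ⟨z, hz⟩
    set F : β × (Fin n → β) → ℝ := fun p => f (Fin.cons p.1 p.2) with hF
    have hFa : AnalyticOnNhd ℝ F Set.univ := by
      have : F = f ∘ (consCLM β n) := by
        funext p; simp [hF, consCLM_apply]
      rw [this]
      exact hf.comp ((consCLM β n).analyticOnNhd univ) (fun _ _ => mem_univ _)
    have hFc : Continuous F := by
      rw [← continuousOn_univ]
      exact hFa.continuousOn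
    have key : ∀ᵐ p ∂(μ.prod (Measure.pi fun _ : Fin n => μ)), F p ≠ 0 := by
      apply step_ae _ _ hFc
      · -- a.e. a, exists y
        have hsl : AnalyticOnNhd ℝ (fun a : β => F (a, Fin.tail z)) Set.univ :=
          hFa.comp (analyticOnNhd_id.prod analyticOnNhd_const) (fun _ _ => mem_univ _)
        have hsl' : ∃ a, F (a, Fin.tail z) ≠ 0 := ⟨z 0, by simpa [hF, Fin.cons_self_tail] using hz⟩
        filter_upwards [hbase _ hsl hsl'] with a ha using ⟨Fin.tail z, ha⟩
      · intro a ⟨y, hy⟩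
        apply ih (fun y => F (a, y))
        · exact hFa.comp (analyticOnNhd_const.prod analyticOnNhd_id) (fun _ _ => mem_univ _)
        · exact ⟨y, hy⟩
    -- transfer
    have mp := measurePreserving_piFinSuccAbove (fun _ : Fin (n+1) => μ) 0
    rw [← mp.map_eq] at key
    have hm : MeasurableSet {p : β × (Fin n → β) | F p ≠ 0} := by
      have : {p : β × (Fin n → β) | F p ≠ 0} = (F ⁻¹' {0})ᶜ := by ext p; simp
      rw [this]; exact (isClosed_singleton.preimage hFc).measurableSet.compl
    rw [ae_map_iff (MeasurableEquiv.piFinSuccAbove (fun _ : Fin (n+1) => β) 0).measurable.aemeasurable hm]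
      at key
    filter_upwards [key] with x hx
    simpa [MeasurableEquiv.piFinSuccAbove, Fin.removeNth_zero, Fin.cons_self_tail, hF] using hx

/-- a.e. nonvanishing of analytic functions on `ℝ^e` w.r.t. pi gaussian. -/
lemma gaussE {e : ℕ} (f : (Fin e → ℝ) → ℝ) (hf : AnalyticOnNhd ℝ f Set.univ)
    (hne : ∃ z, f z ≠ 0) :
    ∀ᵐ v ∂(Measure.pi fun _ : Fin e => gaussianReal 0 1), f v ≠ 0 :=
  aux_pi (gaussianReal 0 1) gaussian_ae_ne_zero_of_analytic e f hf hne

lemma linform_analytic {e : ℕ} (a : Fin e → ℝ) :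
    AnalyticOnNhd ℝ (fun v : Fin e → ℝ => ∑ k, v k * a k) Set.univ := by
  apply Finset.analyticOnNhd_fun_sum
  intro k _
  exact ((ContinuousLinearMap.proj k : (Fin e → ℝ) →L[ℝ] ℝ).analyticOnNhd univ).mul
    analyticOnNhd_const

lemma linform_ae {e : ℕ} (a : Fin e → ℝ) (ha : a ≠ 0) :
    ∀ᵐ v ∂(Measure.pi fun _ : Fin e => gaussianReal 0 1), (∑ k, v k * a k) ≠ 0 := by
  apply gaussE _ (linform_analytic a)
  refine ⟨a, fun h => ha ?_⟩
  have : ∀ k ∈ Finset.univ, a k * a k = 0 := by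
    rw [Finset.sum_eq_zero_iff_of_nonneg (fun k _ => mul_self_nonneg (a k))] at h
    exact h
  funext k
  simpa [mul_self_eq_zero] using this k (Finset.mem_univ k)

lemma exists_v {e m : ℕ} (u : Fin m → Fin e → ℝ) (h0 : ∀ i, u i ≠ 0)
    (hne : ∀ i j, i ≠ j → u i ≠ u j) (hneg : ∀ i j, i ≠ j → u i ≠ -u j) :
    ∃ v : Fin e → ℝ, (∀ i, (∑ k, v k * u i k) ≠ 0) ∧
      ∀ i j, i ≠ j → (∑ k, v k * u i k) ≠ (∑ k, v k * u j k) ∧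
        (∑ k, v k * u i k) ≠ -(∑ k, v k * u j k) := by
  set μ := Measure.pi fun _ : Fin e => gaussianReal 0 1 with hμ
  have h1 : ∀ᵐ v ∂μ, ∀ i, (∑ k, v k * u i k) ≠ 0 := by
    rw [ae_all_iff]
    exact fun i => linform_ae (u i) (h0 i)
  have h2 : ∀ᵐ v ∂μ, ∀ i j, i ≠ j → (∑ k, v k * u i k) ≠ (∑ k, v k * u j k) ∧
      (∑ k, v k * u i k) ≠ -(∑ k, v k * u j k) := by
    rw [ae_all_iff]; intro i; rw [ae_all_iff]; intro j
    by_cases hij : i = j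
    · exact Filter.Eventually.of_forall fun v h => absurd hij h
    · have ha : ∀ᵐ v ∂μ, (∑ k, v k * (u i - u j) k) ≠ 0 :=
        linform_ae _ (sub_ne_zero_of_ne (hne i j hij))
      have hb : ∀ᵐ v ∂μ, (∑ k, v k * (u i + u j) k) ≠ 0 := by
        apply linform_ae
        intro h
        exact hneg i j hij (eq_neg_of_add_eq_zero_left h)
      filter_upwards [ha, hb] with v hva hvb _
      constructor
      · intro h
        apply hva
        simp only [Pi.sub_apply, mul_sub, Finset.sum_sub_distrib, h, sub_self]
      · intro h
        apply hvb
        simp only [Pi.add_apply, mul_add, Finset.sum_add_distrib, h]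
        ring
  have : IsProbabilityMeasure μ := by infer_instance
  obtain ⟨v, hv1, hv2⟩ := (h1.and h2).exists
  exact ⟨v, hv1, hv2⟩

lemma aux_div (a t c D R : ℝ) (hD : D ≠ 0) : a * (t * c / D) * (D * R) = a * c * (t * R) := by
  field_simp

open Polynomial in
lemma indep_core (s : ℝ) (hs : 0 < s) (α : ℕ) (hα0 : α ≠ 0) (hαe : Even α)
    {m : ℕ} (c : Fin m → ℝ) (hc0 : ∀ i, c i ≠ 0)
    (hcα : ∀ i j, i ≠ j → c i ^ α ≠ c j ^ α) (w : Fin m → ℝ)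
    (hw : ∀ t : ℝ, ∑ i, w i * ((t * c i) / (1 + ((t * c i) / s) ^ α)) = 0) :
    ∀ i, w i = 0 := by
  have hsne : s ≠ 0 := hs.ne'
  have hD : ∀ (t : ℝ) (j : Fin m), (1 : ℝ) + (t * c j / s) ^ α ≠ 0 := by
    intro t j
    have : (0:ℝ) ≤ (t * c j / s) ^ α := hαe.pow_nonneg _
    positivity
  -- key real identity : (c j / s)^α * (s / c i)^α = (c j / c i)^α
  have hprod1 : ∀ i j : Fin m, ((c j / s) ^ α) * ((s / c i) ^ α) = (c j / c i) ^ α := by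
    intro i j
    rw [← mul_pow]
    congr 1
    field_simp
  set P : Polynomial ℝ :=
    ∑ i, C (w i * c i) * (X * ∏ j ∈ Finset.univ.erase i, (C ((c j / s) ^ α) * X ^ α + 1))
    with hPdef
  have hPeval : ∀ t : ℝ, P.eval t =
      (∑ i, w i * ((t * c i) / (1 + (t * c i / s) ^ α))) * ∏ j, (1 + (t * c j / s) ^ α) := by
    intro t
    rw [Finset.sum_mul, hPdef, eval_finset_sum]
    apply Finset.sum_congr rfl
    intro i _
    rw [← Finset.mul_prod_erase Finset.univ _ (Finset.mem_univ i)]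
    simp only [eval_mul, eval_C, eval_X, eval_prod, eval_add, eval_pow, eval_one]
    have hprod : ∏ j ∈ Finset.univ.erase i, ((c j / s) ^ α * t ^ α + 1)
        = ∏ j ∈ Finset.univ.erase i, (1 + (t * c j / s) ^ α) := by
      apply Finset.prod_congr rfl
      intro j _
      rw [← mul_pow]
      ring_nf
    rw [hprod, aux_div (w i) t (c i) _ _ (hD t i)]
  have hP0 : P = 0 := by
    apply Polynomial.funext
    intro t
    rw [hPeval t, hw t, eval_zero, zero_mul]
  intro i
  obtain ⟨z, hz⟩ := IsAlgClosed.exists_pow_nat_eq (-(((s / c i) ^ α : ℝ) : ℂ))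
    (Nat.pos_of_ne_zero hα0)
  have hz0 : z ≠ 0 := by
    intro h
    rw [h, zero_pow hα0] at hz
    have h1 : ((s / c i) ^ α : ℝ) ≠ 0 := pow_ne_zero _ (div_ne_zero hsne (hc0 i))
    exact h1 (by exact_mod_cast (neg_eq_zero.mp hz.symm))
  have hQ : (P.map (algebraMap ℝ ℂ)).eval z = 0 := by rw [hP0]; simp
  rw [hPdef] at hQ
  simp only [Polynomial.map_sum, Polynomial.map_mul, Polynomial.map_prod, Polynomial.map_add,
    Polynomial.map_pow, Polynomial.map_C, Polynomial.map_X, Polynomial.map_one,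
    eval_finset_sum, eval_mul, eval_C, eval_X, eval_prod, eval_add, eval_pow, eval_one,
    Complex.coe_algebraMap] at hQ
  have hvanish : ∀ i' ∈ Finset.univ, i' ≠ i →
      (((w i' * c i' : ℝ)) : ℂ) *
        (z * ∏ j ∈ Finset.univ.erase i', ((((c j / s) ^ α : ℝ) : ℂ) * z ^ α + 1)) = 0 := by
    intro i' _ hne
    have hmem : i ∈ Finset.univ.erase i' := Finset.mem_erase.mpr ⟨Ne.symm hne, Finset.mem_univ i⟩
    have hfac : ((((c i / s) ^ α : ℝ)) : ℂ) * z ^ α + 1 = 0 := by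
      rw [hz]
      have h1 : ((c i / s) ^ α) * ((s / c i) ^ α) = 1 := by
        rw [hprod1 i i, div_self (hc0 i), one_pow]
      have h2 : ((((c i / s) ^ α : ℝ)) : ℂ) * (((s / c i) ^ α : ℝ) : ℂ) = 1 := by
        exact_mod_cast h1
      rw [mul_neg]
      rw [h2]
      ring
    rw [Finset.prod_eq_zero hmem hfac]
    ring
  rw [Finset.sum_eq_single_of_mem i (Finset.mem_univ i) hvanish] at hQ
  have hprodne : ∏ j ∈ Finset.univ.erase i, ((((c j / s) ^ α : ℝ) : ℂ) * z ^ α + 1) ≠ 0 := by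
    apply Finset.prod_ne_zero_iff.mpr
    intro j hj
    have hji : j ≠ i := (Finset.mem_erase.mp hj).1
    rw [hz]
    intro hzero
    apply hcα j i hji
    have h2 : ((((c j / s) ^ α : ℝ)) : ℂ) * (((s / c i) ^ α : ℝ) : ℂ) = 1 := by
      rw [mul_neg] at hzero
      linear_combination -hzero
    have hr : ((c j / s) ^ α) * ((s / c i) ^ α) = 1 := by exact_mod_cast h2
    rw [hprod1 i j, div_pow] at hr
    exact (div_eq_one_iff_eq (pow_ne_zero _ (hc0 i))).mp hr
  have hwc : ((w i * c i : ℝ) : ℂ) = 0 := by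
    rcases mul_eq_zero.mp hQ with h | h
    · exact h
    · rcases mul_eq_zero.mp h with h' | h'
      · exact absurd h' hz0
      · exact absurd h' hprodne
  have : w i * c i = 0 := by exact_mod_cast hwc
  exact (mul_eq_zero.mp this).resolve_right (hc0 i)

lemma entry_analytic {m e : ℕ} (u : Fin m → Fin e → ℝ) (s : ℝ) (hs : 0 < s) (α : ℕ)
    (hαe : Even α) (i j : Fin m) :
    AnalyticOnNhd ℝ (fun H : Fin m → Fin e → ℝ =>
      (∑ k, H j k * u i k) / (1 + ((∑ k, H j k * u i k) / s) ^ α)) Set.univ := by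
  have hlin : AnalyticOnNhd ℝ (fun H : Fin m → Fin e → ℝ => ∑ k, H j k * u i k) Set.univ := by
    apply Finset.analyticOnNhd_fun_sum
    intro k _
    exact (((ContinuousLinearMap.proj k : (Fin e → ℝ) →L[ℝ] ℝ).comp
      (ContinuousLinearMap.proj j : (Fin m → Fin e → ℝ) →L[ℝ] (Fin e → ℝ))).analyticOnNhd
        univ).mul analyticOnNhd_const
  apply hlin.div
  · exact analyticOnNhd_const.add ((hlin.div analyticOnNhd_const
      (fun x _ => hs.ne')).pow α)
  · intro H _
    have : (0:ℝ) ≤ ((∑ k, H j k * u i k) / s) ^ α := hαe.pow_nonneg _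
    positivity

lemma det_analytic {m e : ℕ} (u : Fin m → Fin e → ℝ) (s : ℝ) (hs : 0 < s) (α : ℕ)
    (hαe : Even α) :
    AnalyticOnNhd ℝ (fun H : Fin m → Fin e → ℝ =>
      (Matrix.of fun i j : Fin m =>
        (∑ k, H j k * u i k) / (1 + ((∑ k, H j k * u i k) / s) ^ α)).det) Set.univ := by
  have : (fun H : Fin m → Fin e → ℝ =>
      (Matrix.of fun i j : Fin m =>
        (∑ k, H j k * u i k) / (1 + ((∑ k, H j k * u i k) / s) ^ α)).det)
      = fun H => ∑ σ : Equiv.Perm (Fin m), ((Equiv.Perm.sign σ : ℤ) : ℝ) *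
          ∏ i, (∑ k, H i k * u (σ i) k) / (1 + ((∑ k, H i k * u (σ i) k) / s) ^ α) := by
    funext H
    rw [Matrix.det_apply']
    rfl
  rw [this]
  apply Finset.analyticOnNhd_fun_sum
  intro σ _
  apply AnalyticOnNhd.mul analyticOnNhd_const
  apply Finset.analyticOnNhd_fun_prod
  intro i _
  exact entry_analytic u s hs α hαe (σ i) i

/-- full linear independence -/
lemma indep_full (s : ℝ) (hs : 0 < s) (α : ℕ) (hα0 : α ≠ 0) (hαe : Even α)
    {e m : ℕ} (u : Fin m → Fin e → ℝ) (h0 : ∀ i, u i ≠ 0)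
    (hne : ∀ i j, i ≠ j → u i ≠ u j) (hneg : ∀ i j, i ≠ j → u i ≠ -u j)
    (w : Fin m → ℝ)
    (hw : ∀ h : Fin e → ℝ,
      ∑ i, w i * ((∑ k, h k * u i k) / (1 + ((∑ k, h k * u i k) / s) ^ α)) = 0) :
    ∀ i, w i = 0 := by
  obtain ⟨v, hv1, hv2⟩ := exists_v u h0 hne hneg
  set c : Fin m → ℝ := fun i => ∑ k, v k * u i k with hc
  have hcα : ∀ i j, i ≠ j → c i ^ α ≠ c j ^ α := by
    intro i j hij h
    have habs : |c i| = |c j| := by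
      have h1 : |c i| ^ α = |c j| ^ α := by
        rw [hαe.pow_abs, hαe.pow_abs]; exact h
      exact (pow_left_inj₀ (abs_nonneg _) (abs_nonneg _) hα0).mp h1
    rcases abs_eq_abs.mp habs with h' | h'
    · exact (hv2 i j hij).1 h'
    · exact (hv2 i j hij).2 h'
  apply indep_core s hs α hα0 hαe c hv1 hcα
  intro t
  have hsum : ∀ i, ∑ k, (t • v) k * u i k = t * c i := by
    intro i
    simp only [Pi.smul_apply, smul_eq_mul, hc, Finset.mul_sum, mul_assoc]
  have := hw (t • v)
  simp only [hsum] at this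
  exact this

lemma key (s : ℝ) (hs : 0 < s) (α : ℕ) (hα0 : α ≠ 0) (hαe : Even α) (e : ℕ) :
    ∀ (m : ℕ) (u : Fin m → Fin e → ℝ), (∀ i, u i ≠ 0) →
      (∀ i j, i ≠ j → u i ≠ u j) → (∀ i j, i ≠ j → u i ≠ -u j) →
      ∀ᵐ H : Fin m → Fin e → ℝ
        ∂(Measure.pi fun _ : Fin m => Measure.pi fun _ : Fin e => gaussianReal 0 1),
        (Matrix.of fun i j : Fin m =>
          (∑ k, H j k * u i k) / (1 + ((∑ k, H j k * u i k) / s) ^ α)).det ≠ 0 := by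
  intro m
  induction m with
  | zero =>
    intro u _ _ _
    apply Filter.Eventually.of_forall
    intro H
    simp [Matrix.det_fin_zero]
  | succ m ih =>
    intro u h0 hne hneg
    apply aux_pi (Measure.pi fun _ : Fin e => gaussianReal 0 1) gaussE (m+1) _
      (det_analytic u s hs α hαe)
    -- witness
    have ih' := ih (u ∘ Fin.castSucc) (fun i => h0 _)
      (fun i j hij => hne _ _ (fun h => hij (Fin.castSucc_injective m h)))
      (fun i j hij => hneg _ _ (fun h => hij (Fin.castSucc_injective m h)))
    obtain ⟨H', hH'⟩ := ih'.exists
    by_contra hcon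
    push_neg at hcon
    set g : ℝ → ℝ := fun y => y / (1 + (y / s) ^ α) with hg
    set wv : Fin (m+1) → ℝ := fun i =>
      (-1 : ℝ) ^ ((i : ℕ) + (Fin.last m : ℕ)) *
        (Matrix.of fun r k : Fin m => g (∑ kk, H' k kk * u (i.succAbove r) kk)).det with hwv
    have hw : ∀ hv : Fin e → ℝ,
        ∑ i, wv i * ((∑ k, hv k * u i k) / (1 + ((∑ k, hv k * u i k) / s) ^ α)) = 0 := by
      intro hv
      have hdet := hcon (Fin.snoc H' hv)
      rw [Matrix.det_succ_column _ (Fin.last m)] at hdet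
      rw [← hdet]
      apply Finset.sum_congr rfl
      intro i _
      have hsub : (Matrix.of fun i j : Fin (m+1) =>
            (∑ k, (Fin.snoc H' hv : Fin (m+1) → Fin e → ℝ) j k * u i k) /
              (1 + ((∑ k, (Fin.snoc H' hv : Fin (m+1) → Fin e → ℝ) j k * u i k) / s) ^ α)
          ).submatrix i.succAbove (Fin.last m).succAbove
          = Matrix.of fun r k : Fin m => g (∑ kk, H' k kk * u (i.succAbove r) kk) := by
        ext r k
        simp [Matrix.submatrix_apply, Fin.succAbove_last, Fin.snoc_castSucc, hg]
      rw [hsub]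
      have hlast : ∀ i' : Fin (m+1),
          (Fin.snoc H' hv : Fin (m+1) → Fin e → ℝ) (Fin.last m) = hv := fun _ => Fin.snoc_last _ _
      rw [show (Matrix.of fun i j : Fin (m+1) =>
            (∑ k, (Fin.snoc H' hv : Fin (m+1) → Fin e → ℝ) j k * u i k) /
              (1 + ((∑ k, (Fin.snoc H' hv : Fin (m+1) → Fin e → ℝ) j k * u i k) / s) ^ α))
            i (Fin.last m)
          = (∑ k, hv k * u i k) / (1 + ((∑ k, hv k * u i k) / s) ^ α) by
        simp [Fin.snoc_last]]
      rw [hwv]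
      ring
    have hzero := indep_full s hs α hα0 hαe u h0 hne hneg wv hw (Fin.last m)
    rw [hwv] at hzero
    have hlastdet : (Matrix.of fun r k : Fin m =>
        g (∑ kk, H' k kk * u ((Fin.last m).succAbove r) kk)).det ≠ 0 := by
      have : (Matrix.of fun r k : Fin m => g (∑ kk, H' k kk * u ((Fin.last m).succAbove r) kk))
          = Matrix.of fun r k : Fin m =>
            (∑ kk, H' k kk * (u ∘ Fin.castSucc) r kk) /
              (1 + ((∑ kk, H' k kk * (u ∘ Fin.castSucc) r kk) / s) ^ α) := by
        ext r k
        simp [Fin.succAbove_last, hg]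
      rw [this]
      exact hH'
    exact hlastdet (by
      have h1 : ((-1 : ℝ) ^ ((Fin.last m : ℕ) + (Fin.last m : ℕ))) ≠ 0 := by
        apply pow_ne_zero; norm_num
      exact (mul_eq_zero.mp hzero).resolve_left h1)

end ELMAux

/-- For the Rapp activation (`s > 0`, even `α ≥ 2`) and `D` pairwise distinct
observation vectors in `ℝ^d` (`d ≥ 1`) with augmented vectors `x̃⁽ⁱ⁾ = (x⁽ⁱ⁾, 1)`,
for almost every random hidden-weight matrix `H ∈ ℝ^{D×(d+1)}` with i.i.d. standard
Gaussian entries, the `D × D` hidden-layer output matrix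
`G_{i,j} = g(⟨H_{j,·}, x̃⁽ⁱ⁾⟩)` is invertible; consequently, for every target vector
`t ∈ ℝ^D` there is a weight vector `w` with `G w = t`. -/
theorem elm_hidden_matrix_invertible (s : ℝ) (hs : 0 < s) (α : ℕ) (hα : 2 ≤ α)
    (hαe : Even α) (d D : ℕ) (hd : 1 ≤ d)
    (x : Fin D → Fin d → ℝ) (hx : Function.Injective x) :
    ∀ᵐ H : Fin D → Fin (d + 1) → ℝ
      ∂(Measure.pi fun _ : Fin D => Measure.pi fun _ : Fin (d + 1) => gaussianReal 0 1),
      IsUnit (Matrix.of fun i j : Fin D =>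
          (∑ k, H j k * (Fin.snoc (x i) 1 : Fin (d + 1) → ℝ) k)
            / (1 + ((∑ k, H j k * (Fin.snoc (x i) 1 : Fin (d + 1) → ℝ) k) / s) ^ α))
      ∧ ∀ t : Fin D → ℝ, ∃ w : Fin D → ℝ, ∀ i : Fin D,
          ∑ j, ((∑ k, H j k * (Fin.snoc (x i) 1 : Fin (d + 1) → ℝ) k)
            / (1 + ((∑ k, H j k * (Fin.snoc (x i) 1 : Fin (d + 1) → ℝ) k) / s) ^ α)) * w j = t i := by
  have hα0 : α ≠ 0 := by omega
  set u : Fin D → Fin (d + 1) → ℝ := fun i => Fin.snoc (x i) 1 with hu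
  have h0 : ∀ i, u i ≠ 0 := by
    intro i h
    have := congrFun h (Fin.last d)
    simp [hu, Fin.snoc_last] at this
  have hne : ∀ i j, i ≠ j → u i ≠ u j := by
    intro i j hij h
    apply hij
    apply hx
    funext k
    have := congrFun h (Fin.castSucc k)
    simpa [hu, Fin.snoc_castSucc] using this
  have hneg : ∀ i j, i ≠ j → u i ≠ -u j := by
    intro i j _ h
    have := congrFun h (Fin.last d)
    simp [hu, Fin.snoc_last] at this
    norm_num at this
  filter_upwards [key s hs α hα0 hαe (d + 1) D u h0 hne hneg] with H hdet
  set G : Matrix (Fin D) (Fin D) ℝ := Matrix.of fun i j : Fin D =>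
    (∑ k, H j k * u i k) / (1 + ((∑ k, H j k * u i k) / s) ^ α) with hG
  have hGu : IsUnit G.det := isUnit_iff_ne_zero.mpr hdet
  refine ⟨(Matrix.isUnit_iff_isUnit_det G).mpr hGu, ?_⟩
  intro t
  refine ⟨G⁻¹.mulVec t, ?_⟩
  intro i
  show ∑ j, G i j * (G⁻¹.mulVec t) j = t i
  have : ∑ j, G i j * (G⁻¹.mulVec t) j = (G.mulVec (G⁻¹.mulVec t)) i := by
    simp [Matrix.mulVec, dotProduct]
  rw [this, Matrix.mulVec_mulVec, Matrix.mul_nonsing_inv G hGu, Matrix.one_mulVec]
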